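/- Let X and Y be real Banach spaces, let F : X → Y be Fréchet differentiable on X, let ū ∈ X, and let A : Y → X be an injective bounded linear operator. Suppose Y₀, Z₁ ≥ 0 are constants and Z₂ : (0,∞) → [0,∞) is a nondecreasing function such that: (i) ‖A F(ū)‖_X ≤ Y₀; (ii) ‖Id_X − A ∘ DF(ū)‖ ≤ Z₁ in the operator norm on X; (iii) for every r > 0 and every u ∈ X with ‖u − ū‖_X ≤ r one has ‖A ∘ (DF(u) − DF(ū))‖ ≤ Z₂(r)·r. If there exists r₀ > 0 such that (1/2)·Z₂(r₀)·r₀² − (1 − Z₁)·r₀ + Y₀ < 0 and Z₁ + Z₂(r₀)·r₀ < 1, then there exists a unique ũ ∈ X with ‖ũ − ū‖_X ≤ r₀ such that F(ũ) = 0. -/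

import Mathlib

open ContinuousLinearMap

/-- Newton–Kantorovich ("radii polynomial") theorem for a Fréchet differentiable map
`F : X → Y` between real Banach spaces, with approximate solution `ubar` and injective
approximate inverse `A` of the derivative at `ubar`. -/
theorem newton_kantorovich_radii_polynomial
    {X Y : Type*} [NormedAddCommGroup X] [NormedSpace ℝ X] [CompleteSpace X]
    [NormedAddCommGroup Y] [NormedSpace ℝ Y] [CompleteSpace Y]
    (F : X → Y) (DF : X → X →L[ℝ] Y)
    (hDF : ∀ u : X, HasFDerivAt F (DF u) u)
    (ubar : X) (A : Y →L[ℝ] X) (hA : Function.Injective A)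
    (Y₀ Z₁ : ℝ) (hY₀ : 0 ≤ Y₀) (hZ₁ : 0 ≤ Z₁)
    (Z₂ : ℝ → ℝ)
    (hZ₂nonneg : ∀ r : ℝ, 0 < r → 0 ≤ Z₂ r)
    (hZ₂mono : ∀ r s : ℝ, 0 < r → r ≤ s → Z₂ r ≤ Z₂ s)
    (hY : ‖A (F ubar)‖ ≤ Y₀)
    (hZ1 : ‖ContinuousLinearMap.id ℝ X - A.comp (DF ubar)‖ ≤ Z₁)
    (hZ2 : ∀ r : ℝ, 0 < r → ∀ u : X, ‖u - ubar‖ ≤ r →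
      ‖A.comp (DF u - DF ubar)‖ ≤ Z₂ r * r)
    (r₀ : ℝ) (hr₀ : 0 < r₀)
    (hcond1 : (1/2) * Z₂ r₀ * r₀ ^ 2 - (1 - Z₁) * r₀ + Y₀ < 0)
    (hcond2 : Z₁ + Z₂ r₀ * r₀ < 1) :
    ∃! u : X, ‖u - ubar‖ ≤ r₀ ∧ F u = 0 := by
  -- Newton-like operator
  set T : X → X := fun u => u - A (F u) with hT
  set DT : X → X →L[ℝ] X := fun u => ContinuousLinearMap.id ℝ X - A.comp (DF u) with hDT
  have hTderiv : ∀ u : X, HasFDerivAt T (DT u) u := fun u =>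
    (hasFDerivAt_id u).sub (A.hasFDerivAt.comp u (hDF u))
  have hZ₂r₀ : 0 ≤ Z₂ r₀ := hZ₂nonneg r₀ hr₀
  -- bound on derivative on the ball
  have hDTbound : ∀ x : X, ‖x - ubar‖ ≤ r₀ → ‖DT x‖ ≤ Z₁ + Z₂ r₀ * r₀ := by
    intro x hx
    have h1 : DT x = (ContinuousLinearMap.id ℝ X - A.comp (DF ubar))
        - A.comp (DF x - DF ubar) := by
      simp only [hDT, ContinuousLinearMap.comp_sub]
      abel
    rw [h1]
    exact le_trans (norm_sub_le _ _) (add_le_add hZ1 (hZ2 r₀ hr₀ x hx))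
  set κ : ℝ := Z₁ + Z₂ r₀ * r₀ with hκ
  have hκ0 : 0 ≤ κ := by positivity
  -- T is κ-Lipschitz on the closed ball
  have hLip : ∀ x ∈ Metric.closedBall ubar r₀, ∀ y ∈ Metric.closedBall ubar r₀,
      ‖T y - T x‖ ≤ κ * ‖y - x‖ := by
    intro x hx y hy
    refine (convex_closedBall ubar r₀).norm_image_sub_le_of_norm_hasFDerivWithin_le
      (fun z hz => (hTderiv z).hasFDerivWithinAt) (fun z hz => ?_) hx hy
    exact hDTbound z (by simpa [dist_eq_norm] using hz)
  -- key fine estimate: T maps the ball into itself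
  have hmaps : ∀ u ∈ Metric.closedBall ubar r₀, T u ∈ Metric.closedBall ubar r₀ := by
    intro u hu
    rw [Metric.mem_closedBall, dist_eq_norm]
    set v : X := u - ubar with hv
    have hvle : ‖v‖ ≤ r₀ := by simpa [hv, dist_eq_norm] using hu
    have hv0 : 0 ≤ ‖v‖ := norm_nonneg v
    -- f t = T(ubar + t v) - T ubar
    set f : ℝ → X := fun t => T (ubar + t • v) - T ubar with hf
    set f' : ℝ → X := fun t => (DT (ubar + t • v)) v with hf'
    have hderiv : ∀ t : ℝ, HasDerivAt f (f' t) t := by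
      intro t
      have hγ : HasDerivAt (fun t : ℝ => ubar + t • v) v t := by
        simpa using ((hasDerivAt_id t).smul_const v).const_add ubar
      have := ((hTderiv (ubar + t • v)).comp_hasDerivAt t hγ).sub_const (T ubar)
      simpa [hf, hf'] using this
    set B : ℝ → ℝ := fun t => Z₁ * ‖v‖ * t + (Z₂ r₀ * r₀ * ‖v‖ / 2) * t ^ 2 with hB
    set B' : ℝ → ℝ := fun t => Z₁ * ‖v‖ + Z₂ r₀ * r₀ * ‖v‖ * t with hB'
    have hBderiv : ∀ t : ℝ, HasDerivAt B (B' t) t := by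
      intro t
      have h1 : HasDerivAt (fun t : ℝ => Z₁ * ‖v‖ * t) (Z₁ * ‖v‖) t := by
        simpa using (hasDerivAt_id t).const_mul (Z₁ * ‖v‖)
      have h2 : HasDerivAt (fun t : ℝ => (Z₂ r₀ * r₀ * ‖v‖ / 2) * t ^ 2)
          (Z₂ r₀ * r₀ * ‖v‖ * t) t := by
        have := (hasDerivAt_pow 2 t).const_mul (Z₂ r₀ * r₀ * ‖v‖ / 2)
        exact this.congr_deriv (by norm_num; ring)
      exact h1.add h2
    have hbound : ∀ t ∈ Set.Ico (0:ℝ) 1, ‖f' t‖ ≤ B' t := by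
      intro t ht
      have ht0 : 0 ≤ t := ht.1
      have hsplit : f' t = ((ContinuousLinearMap.id ℝ X - A.comp (DF ubar)) v)
          - ((A.comp (DF (ubar + t • v) - DF ubar)) v) := by
        simp only [hf', hDT, ContinuousLinearMap.sub_apply, ContinuousLinearMap.comp_sub,
          ContinuousLinearMap.coe_id', id_eq]
        abel
      have h1 : ‖(ContinuousLinearMap.id ℝ X - A.comp (DF ubar)) v‖ ≤ Z₁ * ‖v‖ :=
        le_trans ((ContinuousLinearMap.id ℝ X - A.comp (DF ubar)).le_opNorm v)
          (mul_le_mul_of_nonneg_right hZ1 hv0)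
      have h2 : ‖(A.comp (DF (ubar + t • v) - DF ubar)) v‖ ≤ Z₂ r₀ * r₀ * t * ‖v‖ := by
        rcases eq_or_lt_of_le ht0 with h | h
        · simp [← h]
        · have hr : (0:ℝ) < t * r₀ := mul_pos h hr₀
          have hmem : ‖(ubar + t • v) - ubar‖ ≤ t * r₀ := by
            have : ‖(ubar + t • v) - ubar‖ = t * ‖v‖ := by
              simp [norm_smul, abs_of_nonneg ht0]
            rw [this]
            exact mul_le_mul_of_nonneg_left hvle ht0
          have hop : ‖A.comp (DF (ubar + t • v) - DF ubar)‖ ≤ Z₂ (t * r₀) * (t * r₀) :=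
            hZ2 (t * r₀) hr _ hmem
          have hmono : Z₂ (t * r₀) ≤ Z₂ r₀ := by
            refine hZ₂mono (t * r₀) r₀ hr ?_
            nlinarith [ht.2]
          have hop2 : ‖A.comp (DF (ubar + t • v) - DF ubar)‖ ≤ Z₂ r₀ * (t * r₀) := by
            refine hop.trans (mul_le_mul_of_nonneg_right hmono hr.le)
          calc ‖(A.comp (DF (ubar + t • v) - DF ubar)) v‖
              ≤ ‖A.comp (DF (ubar + t • v) - DF ubar)‖ * ‖v‖ := le_opNorm _ v
            _ ≤ (Z₂ r₀ * (t * r₀)) * ‖v‖ := mul_le_mul_of_nonneg_right hop2 hv0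
            _ = Z₂ r₀ * r₀ * t * ‖v‖ := by ring
      calc ‖f' t‖ ≤ ‖(ContinuousLinearMap.id ℝ X - A.comp (DF ubar)) v‖
            + ‖(A.comp (DF (ubar + t • v) - DF ubar)) v‖ := by
            rw [hsplit]; exact norm_sub_le _ _
        _ ≤ Z₁ * ‖v‖ + Z₂ r₀ * r₀ * t * ‖v‖ := add_le_add h1 h2
        _ = B' t := by simp [hB']; ring
    have hf0 : ‖f 0‖ ≤ B 0 := by simp [hf, hB]
    have key : ‖f 1‖ ≤ B 1 :=
      image_norm_le_of_norm_deriv_right_le_deriv_boundary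
        (fun t _ => (hderiv t).continuousAt.continuousWithinAt)
        (fun t _ => (hderiv t).hasDerivWithinAt) hf0 hBderiv hbound
        (Set.right_mem_Icc.mpr zero_le_one)
    have hf1 : f 1 = T u - T ubar := by simp [hf, hv]
    have hB1 : B 1 = Z₁ * ‖v‖ + Z₂ r₀ * r₀ * ‖v‖ / 2 := by simp [hB]
    have hTubar : ‖T ubar - ubar‖ ≤ Y₀ := by
      have : T ubar - ubar = -(A (F ubar)) := by simp [hT]
      rw [this, norm_neg]; exact hY
    calc ‖T u - ubar‖ ≤ ‖T u - T ubar‖ + ‖T ubar - ubar‖ := by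
          simpa using norm_sub_le_norm_sub_add_norm_sub (T u) (T ubar) ubar
      _ ≤ (Z₁ * ‖v‖ + Z₂ r₀ * r₀ * ‖v‖ / 2) + Y₀ := by
          refine add_le_add ?_ hTubar
          rw [← hf1, ← hB1]; exact key
      _ ≤ r₀ := by nlinarith
  -- fixed points of T are exactly zeros of F
  have hfix : ∀ u : X, T u = u ↔ F u = 0 := by
    intro u
    constructor
    · intro h
      have hAFu : A (F u) = 0 := by
        have : u - A (F u) = u := h
        linear_combination (norm := abel) - this
      have : A (F u) = A 0 := by simpa using hAFu
      exact hA this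
    · intro h; simp [hT, h]
  -- Banach fixed point on the closed ball
  set s : Set X := Metric.closedBall ubar r₀ with hs
  haveI : CompleteSpace s := (Metric.isClosed_closedBall (x := ubar) (ε := r₀)).completeSpace_coe
  haveI : Nonempty s := ⟨⟨ubar, Metric.mem_closedBall_self hr₀.le⟩⟩
  set g : s → s := fun x => ⟨T x, hmaps x x.2⟩ with hg
  have hκ1 : κ < 1 := hcond2
  have hcontr : ContractingWith ⟨κ, hκ0⟩ g := by
    constructor
    · exact_mod_cast hκ1
    · refine LipschitzWith.of_dist_le_mul fun x y => ?_
      have := hLip y y.2 x x.2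
      show dist (g x) (g y) ≤ κ * dist x y
      simpa [hg, Subtype.dist_eq, dist_eq_norm] using this
  obtain ⟨w, hwfixg⟩ : ∃ w : s, g w = w :=
    ⟨ContractingWith.fixedPoint g hcontr, hcontr.fixedPoint_isFixedPt⟩
  have hwfix : T (w : X) = (w : X) := congrArg Subtype.val hwfixg
  refine ⟨(w : X), ⟨?_, (hfix (w : X)).1 hwfix⟩, ?_⟩
  · have h2 : dist (w : X) ubar ≤ r₀ := w.2
    rwa [dist_eq_norm] at h2
  · intro y hy
    have hyfix : T y = y := (hfix y).2 hy.2
    have hymem : y ∈ s := by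
      rw [hs, Metric.mem_closedBall, dist_eq_norm]
      exact hy.1
    have hle : ‖y - (w : X)‖ ≤ κ * ‖y - (w : X)‖ := by
      have := hLip (w : X) w.2 y hymem
      rwa [hwfix, hyfix] at this
    have h0 : ‖y - (w : X)‖ ≤ 0 := by
      by_contra h
      push_neg at h
      have hlt : κ * ‖y - (w : X)‖ < 1 * ‖y - (w : X)‖ :=
        mul_lt_mul_of_pos_right hκ1 h
      rw [one_mul] at hlt
      exact absurd (hle.trans_lt hlt) (lt_irrefl _)
    have h1 : ‖y - (w : X)‖ = 0 := le_antisymm h0 (norm_nonneg _)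
    exact sub_eq_zero.mp (norm_eq_zero.mp h1)
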